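/- Let K be a convex body in ℝ^d, let {x_i + K} (i = 1,…,n) be a packing of translates of K (pairwise disjoint interiors), and suppose a hyperplane T separates x_p + K from x_q + K and is disjoint from the interior of every x_i + K. Then there is a hyperplane T₀ parallel to T that separates x_p + K₀ from x_q + K₀ and is disjoint from the interior of every x_i + K₀, where K₀ = (1/2)(K − K). -/

import Mathlib

open scoped Pointwise
open Filter

/-- If `f ≤ b` on `S` and `z` is interior to `S`, then `f z < b` (for `f ≠ 0`). -/
lemma aux_interior_lt {E : Type*} [NormedAddCommGroup E] [NormedSpace ℝ E]
    (f : E →L[ℝ] ℝ) (hf : f ≠ 0) {S : Set E} {b : ℝ}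
    (hb : ∀ z ∈ S, f z ≤ b) {z : E} (hz : z ∈ interior S) : f z < b := by
  obtain ⟨u, hu⟩ : ∃ u, f u ≠ 0 := by
    by_contra h
    push_neg at h
    exact hf (ContinuousLinearMap.ext fun y => by simp [h y])
  set v := (f u)⁻¹ • u with hv
  have hfv : f v = 1 := by simp [hv, hu]
  obtain ⟨ε, hε, hball⟩ := Metric.mem_nhds_iff.mp (mem_interior_iff_mem_nhds.mp hz)
  set δ := ε / (2 * (‖v‖ + 1)) with hδ
  have hnv : (0:ℝ) < ‖v‖ + 1 := by positivity
  have hδpos : 0 < δ := by positivity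
  have hmem : z + δ • v ∈ S := by
    apply hball
    rw [Metric.mem_ball, dist_eq_norm]
    have h1 : ‖z + δ • v - z‖ = δ * ‖v‖ := by
      rw [add_sub_cancel_left, norm_smul, Real.norm_of_nonneg hδpos.le]
    rw [h1]
    have h2 : δ * (‖v‖ + 1) = ε / 2 := by
      rw [hδ, div_mul_eq_mul_div, mul_div_mul_right _ _ hnv.ne']
    nlinarith [norm_nonneg v]
  have := hb _ hmem
  rw [map_add, map_smul, hfv, smul_eq_mul, mul_one] at this
  linarith

/-- In a convex set with an interior point, any value of `f` attained on the set can be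
approximated from below by values on the interior. -/
lemma aux_interior_val {E : Type*} [NormedAddCommGroup E] [NormedSpace ℝ E]
    (f : E →L[ℝ] ℝ) {K : Set E} (hconv : Convex ℝ K) {w : E} (hw : w ∈ interior K)
    {k : E} (hk : k ∈ K) {t : ℝ} (ht : f k < t) : ∃ k' ∈ interior K, f k' < t := by
  set g : ℝ → ℝ := fun ε => f ((1 - ε) • k + ε • w) with hg
  have hgc : Continuous g := by
    apply f.continuous.comp
    exact ((continuous_const.sub continuous_id).smul continuous_const).add
      (continuous_id.smul continuous_const)
  have h0 : g 0 = f k := by simp [hg]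
  have h1 : Tendsto g (nhdsWithin (0:ℝ) (Set.Ioi 0)) (nhds (f k)) := by
    have := hgc.tendsto 0
    rw [h0] at this
    exact this.mono_left nhdsWithin_le_nhds
  have h2 : ∀ᶠ ε in nhdsWithin (0:ℝ) (Set.Ioi 0), g ε < t := h1.eventually_lt_const ht
  have h3 : ∀ᶠ ε in nhdsWithin (0:ℝ) (Set.Ioi 0), ε < 1 :=
    (gt_mem_nhds (by norm_num : (0:ℝ) < 1)).filter_mono nhdsWithin_le_nhds
  have h4 : ∀ᶠ ε in nhdsWithin (0:ℝ) (Set.Ioi 0), (0:ℝ) < ε :=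
    eventually_mem_nhdsWithin
  obtain ⟨ε, hgε, hε1, hε0⟩ := (h2.and (h3.and h4)).exists
  refine ⟨(1 - ε) • k + ε • w, ?_, hgε⟩
  exact hconv.combo_closure_interior_mem_interior (subset_closure hk) hw
    (by linarith) hε0 (by ring)

/-- Separating-hyperplane part of Minkowski's lemma for totally separable packings:
if a hyperplane `{f = a}` separates `x_p + K` from `x_q + K` and avoids the interiors of
all members of a packing of translates of `K`, then some parallel hyperplane `{f = a₀}`
separates `x_p + K₀` from `x_q + K₀` and avoids the interiors of all translates of the
Minkowski symmetrization `K₀ = (1/2)(K - K)`. -/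
theorem minkowskiSym_separating_hyperplane {d n : ℕ}
    (K : Set (EuclideanSpace ℝ (Fin d)))
    (hconv : Convex ℝ K) (hcomp : IsCompact K) (hint : (interior K).Nonempty)
    (x : Fin n → EuclideanSpace ℝ (Fin d))
    (hpack : ∀ i j, i ≠ j → Disjoint (interior (x i +ᵥ K)) (interior (x j +ᵥ K)))
    (p q : Fin n)
    (f : EuclideanSpace ℝ (Fin d) →L[ℝ] ℝ) (hf : f ≠ 0) (a : ℝ)
    (hsep₁ : ∀ z ∈ x p +ᵥ K, f z ≤ a)
    (hsep₂ : ∀ z ∈ x q +ᵥ K, a ≤ f z)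
    (havoid : ∀ i, ∀ z ∈ interior (x i +ᵥ K), f z ≠ a) :
    ∃ a₀ : ℝ,
      (∀ z ∈ x p +ᵥ (2⁻¹ : ℝ) • (K - K), f z ≤ a₀) ∧
      (∀ z ∈ x q +ᵥ (2⁻¹ : ℝ) • (K - K), a₀ ≤ f z) ∧
      (∀ i, ∀ z ∈ interior (x i +ᵥ (2⁻¹ : ℝ) • (K - K)), f z ≠ a₀) := by
  obtain ⟨w, hw⟩ := hint
  have hKne : K.Nonempty := ⟨w, interior_subset hw⟩
  set m := sInf (f '' K) with hm
  set M := sSup (f '' K) with hM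
  have hfKcomp : IsCompact (f '' K) := hcomp.image f.continuous
  have hfKne : (f '' K).Nonempty := hKne.image f
  have hbddA : BddAbove (f '' K) := hfKcomp.bddAbove
  have hbddB : BddBelow (f '' K) := hfKcomp.bddBelow
  have hle : ∀ k ∈ K, f k ≤ M := fun k hk => le_csSup hbddA ⟨k, hk, rfl⟩
  have hge : ∀ k ∈ K, m ≤ f k := fun k hk => csInf_le hbddB ⟨k, hk, rfl⟩
  -- bounds on the symmetrized body
  set K₀ : Set (EuclideanSpace ℝ (Fin d)) := (2⁻¹ : ℝ) • (K - K) with hK₀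
  have hK0mem : ∀ z ∈ K₀, ∃ k₁ ∈ K, ∃ k₂ ∈ K, f z = 2⁻¹ * (f k₁ - f k₂) := by
    rintro z ⟨y, hy, rfl⟩
    rw [Set.mem_sub] at hy
    obtain ⟨k₁, hk₁, k₂, hk₂, rfl⟩ := hy
    exact ⟨k₁, hk₁, k₂, hk₂, by rw [map_smul, map_sub]; simp [smul_eq_mul]⟩
  have hK0ub : ∀ z ∈ K₀, f z ≤ (M - m) / 2 := by
    intro z hz
    obtain ⟨k₁, hk₁, k₂, hk₂, hfz⟩ := hK0mem z hz
    rw [hfz]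
    linarith [hle k₁ hk₁, hge k₂ hk₂]
  have hK0lb : ∀ z ∈ K₀, -((M - m) / 2) ≤ f z := by
    intro z hz
    obtain ⟨k₁, hk₁, k₂, hk₂, hfz⟩ := hK0mem z hz
    rw [hfz]
    linarith [hle k₂ hk₂, hge k₁ hk₁]
  have hK0ub' : ∀ z ∈ interior K₀, f z < (M - m) / 2 :=
    fun z hz => aux_interior_lt f hf hK0ub hz
  have hK0lb' : ∀ z ∈ interior K₀, -((M - m) / 2) < f z := by
    intro z hz
    have hneg : ∀ z ∈ K₀, (-f) z ≤ (M - m) / 2 := by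
      intro z hz
      have := hK0lb z hz
      simp only [ContinuousLinearMap.neg_apply]
      linarith
    have := aux_interior_lt (-f) (neg_ne_zero.mpr hf) hneg hz
    simp only [ContinuousLinearMap.neg_apply] at this
    linarith
  -- translate the separation hypotheses
  have hpM : f (x p) + M ≤ a := by
    have h1 : ∀ y ∈ f '' K, y ≤ a - f (x p) := by
      rintro y ⟨k, hk, rfl⟩
      have := hsep₁ (x p +ᵥ k) (Set.vadd_mem_vadd_set hk)
      rw [vadd_eq_add, map_add] at this
      linarith
    have := csSup_le hfKne h1
    rw [← hM] at this
    linarith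
  have hqm : a ≤ f (x q) + m := by
    have h1 : ∀ y ∈ f '' K, a - f (x q) ≤ y := by
      rintro y ⟨k, hk, rfl⟩
      have := hsep₂ (x q +ᵥ k) (Set.vadd_mem_vadd_set hk)
      rw [vadd_eq_add, map_add] at this
      linarith
    have := le_csInf hfKne h1
    rw [← hm] at this
    linarith
  -- dichotomy for each translate, from `havoid`
  have hdich : ∀ i, f (x i) + M ≤ a ∨ a ≤ f (x i) + m := by
    intro i
    by_contra h
    push_neg at h
    obtain ⟨h1, h2⟩ := h
    -- so m < a - f (x i) < M; find interior point of K with this f-value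
    set t := a - f (x i) with htdef
    have htm : m < t := by linarith
    have htM : t < M := by linarith
    -- exists k ∈ K with f k < t
    have hex1 : ∃ k ∈ K, f k < t := by
      by_contra hc
      push_neg at hc
      have : t ≤ m := le_csInf hfKne (by rintro y ⟨k, hk, rfl⟩; exact hc k hk)
      linarith
    have hex2 : ∃ k ∈ K, t < f k := by
      by_contra hc
      push_neg at hc
      have : M ≤ t := csSup_le hfKne (by rintro y ⟨k, hk, rfl⟩; exact hc k hk)
      linarith
    obtain ⟨k₁, hk₁, hk₁t⟩ := hex1
    obtain ⟨k₂, hk₂, hk₂t⟩ := hex2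
    obtain ⟨k₁', hk₁', hk₁'t⟩ := aux_interior_val f hconv hw hk₁ hk₁t
    have hex2' : ∃ k₂' ∈ interior K, t < f k₂' := by
      have hneg : (-f) k₂ < -t := by simp; linarith
      obtain ⟨k', hk', hk't⟩ := aux_interior_val (-f) hconv hw hk₂ hneg
      refine ⟨k', hk', ?_⟩
      simp only [ContinuousLinearMap.neg_apply] at hk't
      linarith
    obtain ⟨k₂', hk₂', hk₂'t⟩ := hex2'
    -- convexity of `f '' interior K` gives a point with value exactly `t`
    have hcvx : Convex ℝ (f '' interior K) :=
      hconv.interior.linear_image f.toLinearMap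
    have htmem : t ∈ f '' interior K := by
      have := hcvx.ordConnected.out ⟨k₁', hk₁', rfl⟩ ⟨k₂', hk₂', rfl⟩
      exact this ⟨hk₁'t.le, hk₂'t.le⟩
    obtain ⟨k, hk, hfk⟩ := htmem
    have hzmem : x i + k ∈ interior (x i +ᵥ K) := by
      rw [interior_vadd]
      exact ⟨k, hk, rfl⟩
    exact havoid i _ hzmem (by rw [map_add]; rw [htdef] at hfk; linarith)
  -- conclusion
  refine ⟨a - (m + M) / 2, ?_, ?_, ?_⟩
  · rintro z hz
    obtain ⟨y, hy, rfl⟩ := hz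
    simp only [vadd_eq_add, map_add]
    have := hK0ub y hy
    linarith
  · rintro z hz
    obtain ⟨y, hy, rfl⟩ := hz
    simp only [vadd_eq_add, map_add]
    have := hK0lb y hy
    linarith
  · intro i z hz
    rw [interior_vadd] at hz
    obtain ⟨y, hy, rfl⟩ := hz
    simp only [vadd_eq_add, map_add]
    have hyu := hK0ub' y hy
    have hyl := hK0lb' y hy
    rcases hdich i with h | h
    · intro hc; linarith
    · intro hc; linarith
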